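/- arXiv:1805.06692 — 3 statements merged into one kernel-verified Lean document; each statement's English description precedes it below -/
import Mathlib

section
/- (Ryser's formula) For an n×n matrix X = (x_{ij}) of variables, the permanent satisfies perm(X) = (−1)^n · Σ_{S ⊆ [n]} (−1)^{|S|} · ∏_{i=1}^n (Σ_{j ∈ S} x_{ij}). -/
/-- The permanent of a square matrix over a commutative ring. -/
def perm {d : ℕ} {R : Type*} [CommRing R] (T : Matrix (Fin d) (Fin d) R) : R :=
  ∑ σ : Equiv.Perm (Fin d), ∏ i, T i (σ i)

lemma aux_pow_sum {α : Type*} [DecidableEq α] {R : Type*} [CommRing R] (s : Finset α) :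
    ∑ t ∈ s.powerset, (-1 : R) ^ t.card = if s = ∅ then 1 else 0 := by
  have := Finset.sum_powerset_neg_one_pow_card (x := s)
  calc ∑ t ∈ s.powerset, (-1 : R) ^ t.card
      = ∑ t ∈ s.powerset, ((-1 : ℤ) ^ t.card : ℤ) • (1 : R) := by
        apply Finset.sum_congr rfl; intro t _; simp
    _ = ((∑ t ∈ s.powerset, (-1 : ℤ) ^ t.card) : ℤ) • (1 : R) := by
        rw [Finset.sum_smul]
    _ = _ := by rw [this]; split <;> simp

lemma aux_sum {n : ℕ} {R : Type*} [CommRing R] (A : Finset (Fin n)) :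
    (∑ S : Finset (Fin n), if A ⊆ S then ((-1 : R) ^ S.card) else 0)
      = if A = Finset.univ then (-1 : R) ^ n else 0 := by
  rw [← Finset.sum_filter]
  have h1 : ∑ S ∈ Finset.univ.filter (fun S => A ⊆ S), (-1 : R) ^ S.card
      = ∑ T ∈ Aᶜ.powerset, (-1 : R) ^ (T ∪ A).card := by
    refine Finset.sum_nbij' (fun S => S \ A) (fun T => T ∪ A) ?_ ?_ ?_ ?_ ?_
    · intro S hS
      simp only [Finset.mem_filter] at hS
      simp only [Finset.mem_powerset]
      intro x hx
      simp only [Finset.mem_sdiff] at hx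
      simp [Finset.mem_compl, hx.2]
    · intro T hT
      simp [Finset.mem_filter]
    · intro S hS
      simp only [Finset.mem_filter] at hS
      exact Finset.sdiff_union_of_subset hS.2
    · intro T hT
      simp only [Finset.mem_powerset] at hT
      show (T ∪ A) \ A = T
      apply Finset.union_sdiff_cancel_right
      exact Finset.disjoint_left.mpr fun x hx hxA => (Finset.mem_compl.mp (hT hx)) hxA
    · intro S hS
      simp only [Finset.mem_filter] at hS
      show (-1 : R) ^ S.card = (-1 : R) ^ (S \ A ∪ A).card
      rw [Finset.sdiff_union_of_subset hS.2]
  rw [h1]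
  have h2 : ∀ T ∈ Aᶜ.powerset, (-1 : R) ^ (T ∪ A).card = (-1 : R) ^ T.card * (-1 : R) ^ A.card := by
    intro T hT
    simp only [Finset.mem_powerset] at hT
    rw [Finset.card_union_of_disjoint, pow_add]
    exact Finset.disjoint_left.mpr fun x hx hxA => (Finset.mem_compl.mp (hT hx)) hxA
  rw [Finset.sum_congr rfl h2, ← Finset.sum_mul, aux_pow_sum]
  by_cases h : A = Finset.univ
  · have hc : Aᶜ = ∅ := by simp [h]
    simp [h, hc, Finset.card_univ]
  · have hc : Aᶜ ≠ ∅ := by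
      intro hc
      exact h (by simpa [Finset.compl_eq_empty_iff] using hc)
    simp [h, hc]

lemma ryser_general {n : ℕ} {R : Type*} [CommRing R]
    (X : Matrix (Fin n) (Fin n) R) :
    perm X = (-1 : R) ^ n *
      ∑ S : Finset (Fin n), (-1 : R) ^ S.card * ∏ i, ∑ j ∈ S, X i j := by
  have h1 : ∀ S : Finset (Fin n), (∏ i, ∑ j ∈ S, X i j)
      = ∑ f ∈ Finset.univ.filter (fun f : Fin n → Fin n => ∀ i, f i ∈ S),
          ∏ i, X i (f i) := by
    intro S
    rw [Finset.prod_univ_sum (t := fun _ => S) (f := fun i j => X i j)]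
    apply Finset.sum_congr _ (fun _ _ => rfl)
    ext f; simp [Fintype.mem_piFinset]
  have h2 : ∀ f : Fin n → Fin n,
      (∑ S : Finset (Fin n), (-1:R) ^ S.card * if (∀ i, f i ∈ S) then ∏ i, X i (f i) else 0)
      = (if Finset.univ.image f = Finset.univ then (-1:R)^n else 0) * ∏ i, X i (f i) := by
    intro f
    rw [← aux_sum (Finset.univ.image f), Finset.sum_mul]
    apply Finset.sum_congr rfl
    intro S _
    rw [mul_ite, mul_zero, ite_mul, zero_mul]
    congr 1
    simp [Finset.image_subset_iff]
  have hperm : perm X = ∑ f ∈ Finset.univ.filter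
      (fun f : Fin n → Fin n => Finset.univ.image f = Finset.univ), ∏ i, X i (f i) := by
    rw [perm]
    refine Finset.sum_bij' (fun σ _ => (σ : Fin n → Fin n))
      (fun f hf => Equiv.ofBijective f ?_) ?_ ?_ ?_ ?_ ?_
    · simp only [Finset.mem_filter] at hf
      have hsurj : Function.Surjective f := by
        intro y
        have : y ∈ Finset.univ.image f := by rw [hf.2]; exact Finset.mem_univ y
        obtain ⟨x, _, hx⟩ := Finset.mem_image.mp this
        exact ⟨x, hx⟩
      exact Finite.surjective_iff_bijective.mp hsurj
    · intro σ _
      simp only [Finset.mem_filter, Finset.mem_univ, true_and]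
      ext y
      simp only [Finset.mem_image, Finset.mem_univ, true_and, iff_true]
      exact ⟨σ.symm y, σ.apply_symm_apply y⟩
    · intro f hf; exact Finset.mem_univ _
    · intro σ _; ext x; rfl
    · intro f hf; rfl
    · intro σ _; rfl
  have key : (∑ S : Finset (Fin n), (-1 : R) ^ S.card * ∏ i, ∑ j ∈ S, X i j)
      = (-1 : R) ^ n * perm X := by
    simp_rw [h1, Finset.sum_filter, Finset.mul_sum]
    rw [Finset.sum_comm]
    simp_rw [h2, ite_mul, zero_mul, ← Finset.sum_filter, ← Finset.mul_sum, ← hperm]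
  rw [key, ← mul_assoc, ← pow_add]
  rw [Even.neg_one_pow ⟨n, (two_mul n).symm ▸ rfl⟩, one_mul]

/-- Ryser's formula for the permanent of the `n × n` matrix of variables `x_{ij}`. -/
theorem ryser_formula {n : ℕ} {R : Type*} [CommRing R]
    (X : Matrix (Fin n) (Fin n) (MvPolynomial (Fin n × Fin n) R))
    (hX : ∀ i j, X i j = MvPolynomial.X (i, j)) :
    perm X =
      (-1 : MvPolynomial (Fin n × Fin n) R) ^ n *
        ∑ S : Finset (Fin n), (-1 : MvPolynomial (Fin n × Fin n) R) ^ S.card *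
          ∏ i, ∑ j ∈ S, X i j := ryser_general X
end

section
/- Let C_1 = ∏_{i=1}^d L_i and C_2 = ∏_{i=1}^d L'_i be products of homogeneous linear forms over ℚ. Then the scaled Hadamard product satisfies C_1 ∘ˢ C_2 = Σ_{σ ∈ S_d} ∏_{i=1}^d (L_i ∘ˢ L'_{σ(i)}). -/
open MvPolynomial

/-- The linear form `L = ∑ i, a i * x i`. -/
noncomputable def lin {n : ℕ} (a : Fin n → ℚ) : MvPolynomial (Fin n) ℚ :=
  ∑ i, MvPolynomial.C (a i) * MvPolynomial.X i

/-- `m! = e₁! ⋯ e_r!` for a monomial exponent vector `m`. -/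
def mfact {n : ℕ} (m : Fin n →₀ ℕ) : ℕ := m.prod fun _ e => e.factorial

/-- The scaled Hadamard product `f ∘ˢ g = ∑ m, (m! · [m]f · [m]g) · m`. -/
noncomputable def shad {n : ℕ} (f g : MvPolynomial (Fin n) ℚ) :
    MvPolynomial (Fin n) ℚ :=
  ∑ m ∈ f.support,
    MvPolynomial.monomial m ((mfact m : ℚ) * f.coeff m * g.coeff m)

namespace ShadAux

variable {n d : ℕ}

/-- The exponent vector of the monomial `∏ i, x_{f i}`. -/
noncomputable def cnt (f : Fin d → Fin n) : Fin n →₀ ℕ := ∑ i, Finsupp.single (f i) 1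

lemma coeff_shad (f g : MvPolynomial (Fin n) ℚ) (m : Fin n →₀ ℕ) :
    coeff m (shad f g) = (mfact m : ℚ) * coeff m f * coeff m g := by
  classical
  rw [shad, coeff_sum]
  simp only [coeff_monomial]
  rw [Finset.sum_ite_eq' f.support m
    (fun m' => (mfact m' : ℚ) * coeff m' f * coeff m' g)]
  split_ifs with h
  · rfl
  · rw [MvPolynomial.notMem_support_iff.mp h]; ring

lemma lin_eq (a : Fin n → ℚ) :
    lin a = ∑ j, monomial (Finsupp.single j 1) (a j) := by
  unfold lin
  refine Finset.sum_congr rfl fun j _ => ?_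
  rw [show (MvPolynomial.X j : MvPolynomial (Fin n) ℚ) = monomial (Finsupp.single j 1) 1 from rfl,
    C_mul_monomial, mul_one]

lemma coeff_lin (a : Fin n → ℚ) (j : Fin n) :
    coeff (Finsupp.single j 1) (lin a) = a j := by
  classical
  rw [lin_eq, coeff_sum]
  simp only [coeff_monomial, Finsupp.single_left_inj one_ne_zero]
  simp

lemma mfact_single (j : Fin n) : mfact (Finsupp.single j 1) = 1 := by
  unfold mfact
  rw [Finsupp.prod_single_index] <;> simp

lemma shad_lin (a b : Fin n → ℚ) :
    shad (lin a) (lin b) = ∑ j, monomial (Finsupp.single j 1) (a j * b j) := by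
  classical
  unfold shad
  rw [Finset.sum_subset (s₁ := (lin a).support)
      (s₂ := Finset.univ.image fun j => Finsupp.single j 1)]
  · rw [Finset.sum_image (fun j _ k _ h => (Finsupp.single_left_inj one_ne_zero).mp h)]
    refine Finset.sum_congr rfl fun j _ => ?_
    rw [coeff_lin, coeff_lin, mfact_single]
    norm_num
  · intro m hm
    rw [lin_eq] at hm
    have := MvPolynomial.support_sum hm
    rw [Finset.mem_biUnion] at this
    obtain ⟨j, _, hj⟩ := this
    have := MvPolynomial.support_monomial_subset hj
    simp only [Finset.mem_singleton] at this
    exact Finset.mem_image.mpr ⟨j, Finset.mem_univ j, this.symm⟩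
  · intro m _ hm
    rw [MvPolynomial.notMem_support_iff.mp hm]
    simp

lemma prod_monomial {ι : Type*} (s : Finset ι) (k : ι → Fin n →₀ ℕ) (c : ι → ℚ) :
    ∏ i ∈ s, (monomial (k i) (c i) : MvPolynomial (Fin n) ℚ) =
      monomial (∑ i ∈ s, k i) (∏ i ∈ s, c i) := by
  classical
  induction s using Finset.induction with
  | empty => simp [MvPolynomial.monomial_zero']
  | insert _ _ h ih =>
    rw [Finset.prod_insert h, Finset.sum_insert h, Finset.prod_insert h, ih,
      monomial_mul]

lemma prod_sum_monomial (c : Fin d → Fin n → ℚ) :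
    ∏ i, (∑ j, monomial (Finsupp.single j 1) (c i j) : MvPolynomial (Fin n) ℚ) =
      ∑ f : Fin d → Fin n, monomial (cnt f) (∏ i, c i (f i)) := by
  classical
  rw [Finset.prod_univ_sum]
  rw [Fintype.piFinset_univ]
  refine Finset.sum_congr rfl fun f _ => ?_
  rw [prod_monomial]
  rfl

lemma coeff_prod_lin (c : Fin d → Fin n → ℚ) (m : Fin n →₀ ℕ) :
    coeff m (∏ i, lin (c i)) =
      ∑ f : Fin d → Fin n, if cnt f = m then ∏ i, c i (f i) else 0 := by
  classical
  simp only [lin_eq]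
  rw [prod_sum_monomial, coeff_sum]
  simp only [coeff_monomial]

lemma cnt_apply (f : Fin d → Fin n) (j : Fin n) :
    cnt f j = (Finset.univ.filter fun i => f i = j).card := by
  classical
  rw [Finset.card_filter, cnt, Finsupp.finset_sum_apply]
  simp [Finsupp.single_apply]

lemma cnt_comp (f : Fin d → Fin n) (σ : Equiv.Perm (Fin d)) : cnt (f ∘ σ) = cnt f := by
  exact Fintype.sum_equiv σ _ _ (fun i => rfl)

lemma mfact_cnt (f : Fin d → Fin n) :
    mfact (cnt f) = ∏ j, (cnt f j).factorial := by
  unfold mfact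
  rw [Finsupp.prod_fintype]
  intro i
  simp

lemma stab_card (f : Fin d → Fin n) :
    (Finset.univ.filter fun σ : Equiv.Perm (Fin d) => f ∘ σ = f).card = mfact (cnt f) := by
  classical
  have h := DomMulAct.stabilizer_card f
  rw [Fintype.card_subtype] at h
  rw [h, mfact_cnt]
  refine Finset.prod_congr rfl fun j _ => ?_
  rw [cnt_apply, Fintype.card_subtype]

lemma exists_perm {f g : Fin d → Fin n} (h : cnt f = cnt g) :
    ∃ σ : Equiv.Perm (Fin d), g ∘ σ = f := by
  classical
  have hms : (Finset.univ.val.map f) = (Finset.univ.val.map g) := by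
    ext j
    rw [Multiset.count_map, Multiset.count_map]
    have h1 : ∀ h : Fin d → Fin n,
        Multiset.card (Finset.univ.val.filter fun a => j = h a) = cnt h j := by
      intro h
      rw [cnt_apply]
      rw [show (Finset.univ.filter fun i => h i = j).card =
        Multiset.card ((Finset.univ.filter fun i => h i = j)).val from rfl]
      rw [Finset.filter_val]
      congr 1
      exact Multiset.filter_congr fun x _ => by constructor <;> exact fun e => e.symm
    rw [h1 f, h1 g, h]
  have hperm : List.Perm (List.ofFn f) (List.ofFn g) := by
    rw [← Multiset.coe_eq_coe, ← Fin.univ_val_map, ← Fin.univ_val_map]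
    exact hms
  have hperm2 : (List.ofFn (f ∘ ⇑(Tuple.sort f))).Perm (List.ofFn (g ∘ ⇑(Tuple.sort g))) :=
    ((Tuple.sort f).ofFn_comp_perm f).trans
      (hperm.trans ((Tuple.sort g).ofFn_comp_perm g).symm)
  have hsorted : f ∘ ⇑(Tuple.sort f) = g ∘ ⇑(Tuple.sort g) :=
    List.ofFn_injective (List.Perm.eq_of_sortedLE
      (Tuple.monotone_sort f).sortedLE_ofFn (Tuple.monotone_sort g).sortedLE_ofFn hperm2)
  refine ⟨(Tuple.sort f).symm.trans (Tuple.sort g), ?_⟩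
  funext i
  have := congrFun hsorted ((Tuple.sort f).symm i)
  simpa using this.symm

lemma fiber_card (f g : Fin d → Fin n) :
    (Finset.univ.filter fun σ : Equiv.Perm (Fin d) => f ∘ σ = g).card =
      if cnt g = cnt f then mfact (cnt f) else 0 := by
  classical
  split_ifs with h
  · obtain ⟨σ₀, hσ₀⟩ := exists_perm h
    rw [← stab_card f]
    refine Finset.card_bij' (fun σ _ => σ * σ₀⁻¹) (fun τ _ => τ * σ₀) ?_ ?_ ?_ ?_
    · intro σ hσ
      simp only [Finset.mem_filter, Finset.mem_univ, true_and] at hσ ⊢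
      funext x
      simp only [Function.comp_apply, Equiv.Perm.mul_apply]
      rw [show f (σ (σ₀⁻¹ x)) = g (σ₀⁻¹ x) from congrFun hσ _,
        show g (σ₀⁻¹ x) = f (σ₀ (σ₀⁻¹ x)) from (congrFun hσ₀ _).symm]
      simp
    · intro τ hτ
      simp only [Finset.mem_filter, Finset.mem_univ, true_and] at hτ ⊢
      funext x
      simp only [Function.comp_apply, Equiv.Perm.mul_apply]
      rw [show f (τ (σ₀ x)) = f (σ₀ x) from congrFun hτ _]
      exact congrFun hσ₀ x
    · intro σ _; simp [mul_assoc]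
    · intro τ _; simp [mul_assoc]
  · rw [Finset.card_eq_zero, Finset.filter_eq_empty_iff]
    intro σ _ hσ
    exact h (by rw [← hσ]; exact cnt_comp f σ)

lemma sum_perm_comp (f : Fin d → Fin n) (B : (Fin d → Fin n) → ℚ) :
    ∑ σ : Equiv.Perm (Fin d), B (f ∘ σ) =
      (mfact (cnt f) : ℚ) * ∑ g : Fin d → Fin n, if cnt g = cnt f then B g else 0 := by
  classical
  have h1 : ∀ σ : Equiv.Perm (Fin d),
      B (f ∘ σ) = ∑ g : Fin d → Fin n, if f ∘ σ = g then B g else 0 := by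
    intro σ
    rw [Finset.sum_ite_eq Finset.univ (f ∘ σ) B]
    simp
  simp_rw [h1]
  rw [Finset.sum_comm]
  have h2 : ∀ g : Fin d → Fin n,
      (∑ σ : Equiv.Perm (Fin d), if f ∘ σ = g then B g else 0) =
        ((Finset.univ.filter fun σ : Equiv.Perm (Fin d) => f ∘ σ = g).card : ℚ) * B g := by
    intro g
    rw [← Finset.sum_filter, Finset.sum_const, nsmul_eq_mul]
  simp_rw [h2, fiber_card]
  rw [Finset.mul_sum]
  refine Finset.sum_congr rfl fun g _ => ?_
  by_cases h : cnt g = cnt f <;> simp [h]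

end ShadAux

open ShadAux in
theorem shad_prod_linear_forms {n d : ℕ} (a b : Fin d → Fin n → ℚ) :
    shad (∏ i, lin (a i)) (∏ i, lin (b i)) =
      ∑ σ : Equiv.Perm (Fin d), ∏ i, shad (lin (a i)) (lin (b (σ i))) := by
  classical
  apply MvPolynomial.ext
  intro m
  rw [coeff_shad, coeff_prod_lin, coeff_prod_lin, coeff_sum]
  have hR : ∀ σ : Equiv.Perm (Fin d),
      coeff m (∏ i, shad (lin (a i)) (lin (b (σ i)))) =
        ∑ f : Fin d → Fin n, if cnt f = m then ∏ i, a i (f i) * b (σ i) (f i) else 0 := by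
    intro σ
    simp only [shad_lin]
    rw [prod_sum_monomial (fun i j => a i j * b (σ i) j), coeff_sum]
    simp only [coeff_monomial]
  simp_rw [hR]
  rw [Finset.sum_comm]
  have key : ∀ f : Fin d → Fin n,
      (∑ σ : Equiv.Perm (Fin d),
          if cnt f = m then ∏ i, a i (f i) * b (σ i) (f i) else 0)
        = (if cnt f = m then ∏ i, a i (f i) else 0) *
            ((mfact m : ℚ) *
              ∑ g : Fin d → Fin n, if cnt g = m then ∏ i, b i (g i) else 0) := by
    intro f
    by_cases hf : cnt f = m
    · simp only [if_pos hf]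
      have hsplit : ∀ σ : Equiv.Perm (Fin d),
          (∏ i, a i (f i) * b (σ i) (f i))
            = (∏ i, a i (f i)) * ∏ i, b i ((f ∘ ⇑σ⁻¹) i) := by
        intro σ
        rw [Finset.prod_mul_distrib]
        congr 1
        refine Fintype.prod_equiv σ _ _ fun i => ?_
        simp
      simp_rw [hsplit]
      rw [← Finset.mul_sum]
      congr 1
      have hinv : (∑ σ : Equiv.Perm (Fin d), ∏ i, b i ((f ∘ ⇑σ⁻¹) i))
          = ∑ σ : Equiv.Perm (Fin d), ∏ i, b i ((f ∘ ⇑σ) i) :=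
        Fintype.sum_equiv (Equiv.inv (Equiv.Perm (Fin d))) _ _ fun σ => rfl
      rw [hinv, sum_perm_comp f (fun g => ∏ i, b i (g i)), hf]
    · simp [hf]
  simp_rw [key]
  rw [← Finset.sum_mul]
  ring
end

section
/- Let f, g ∈ ℚ[x_1,...,x_n] each be expressible as a sum of products of homogeneous linear forms: f = Σ_{i=1}^s ∏_{j=1}^d L_{i,j} and g = Σ_{i=1}^{s'} ∏_{j=1}^d L'_{i,j}. Then the scaled Hadamard product f ∘ˢ g is expressible as a sum of at most 2^d · s · s' products, each a product of d homogeneous linear forms. -/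
open MvPolynomial

lemma shad_coeff {n : ℕ} (f g : MvPolynomial (Fin n) ℚ) (m : Fin n →₀ ℕ) :
    (shad f g).coeff m = (mfact m : ℚ) * f.coeff m * g.coeff m := by
  rw [shad, coeff_sum]
  by_cases h : m ∈ f.support
  · rw [Finset.sum_eq_single m]
    · simp [coeff_monomial]
    · intro b _ hb; simp [coeff_monomial, hb]
    · intro hm; exact absurd h hm
  · rw [Finset.sum_eq_zero]
    · simp only [notMem_support_iff] at h; simp [h]
    · intro b hb
      have : b ≠ m := by rintro rfl; exact h hb
      simp [coeff_monomial, this]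

lemma mfact_eq_prod {n : ℕ} (m : Fin n →₀ ℕ) :
    mfact m = ∏ i, (m i).factorial := by
  rw [mfact, Finsupp.prod_fintype]
  intro i; simp

lemma mfact_add_single {n : ℕ} (m : Fin n →₀ ℕ) (i : Fin n) :
    mfact (m + Finsupp.single i 1) = (m i + 1) * mfact m := by
  rw [mfact_eq_prod, mfact_eq_prod]
  rw [← Finset.mul_prod_erase Finset.univ _ (Finset.mem_univ i),
      ← Finset.mul_prod_erase Finset.univ (fun i => (m i).factorial) (Finset.mem_univ i)]
  have h1 : ((m + Finsupp.single i 1 : Fin n →₀ ℕ)) i = m i + 1 := by simp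
  rw [h1, Nat.factorial_succ, mul_assoc]
  congr 1
  congr 1
  apply Finset.prod_congr rfl
  intro k hk
  have : k ≠ i := (Finset.mem_erase.mp hk).1
  simp [Finsupp.single_eq_of_ne' (Ne.symm this)]

lemma coeff_pderiv {n : ℕ} (i : Fin n) (f : MvPolynomial (Fin n) ℚ) (m : Fin n →₀ ℕ) :
    (MvPolynomial.pderiv i f).coeff m = ((m i : ℚ) + 1) * f.coeff (m + Finsupp.single i 1) := by
  induction f using MvPolynomial.induction_on' with
  | monomial s a =>
    rw [pderiv_monomial, coeff_monomial, coeff_monomial]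
    by_cases h : s = m + Finsupp.single i 1
    · subst h
      have h1 : m + Finsupp.single i 1 - Finsupp.single i 1 = m := by
        ext k; simp [Finsupp.tsub_apply, Finsupp.single_apply]
      have h2 : ((m + Finsupp.single i 1 : Fin n →₀ ℕ)) i = m i + 1 := by simp
      rw [if_pos h1, h2]
      simp only [if_pos trivial]
      push_cast
      ring
    · rw [if_neg h]
      by_cases h2 : s - Finsupp.single i 1 = m
      · by_cases h3 : s i = 0
        · simp [h3]
        · exfalso
          apply h
          rw [← h2]
          rw [tsub_add_cancel_of_le]
          rw [Finsupp.single_le_iff]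
          omega
      · simp [h2]
  | add p q hp hq =>
    simp [map_add, coeff_add, hp, hq]
    ring

lemma shad_sum_left {n : ℕ} {α : Type*} (s : Finset α) (f : α → MvPolynomial (Fin n) ℚ)
    (g : MvPolynomial (Fin n) ℚ) :
    shad (∑ i ∈ s, f i) g = ∑ i ∈ s, shad (f i) g := by
  ext m; simp [shad_coeff, coeff_sum, Finset.sum_mul, Finset.mul_sum]

lemma shad_sum_right {n : ℕ} {α : Type*} (s : Finset α) (f : MvPolynomial (Fin n) ℚ)
    (g : α → MvPolynomial (Fin n) ℚ) :
    shad f (∑ i ∈ s, g i) = ∑ i ∈ s, shad f (g i) := by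
  ext m; simp [shad_coeff, coeff_sum, Finset.sum_mul, Finset.mul_sum]

lemma shad_C_mul_left {n : ℕ} (c : ℚ) (f g : MvPolynomial (Fin n) ℚ) :
    shad (MvPolynomial.C c * f) g = MvPolynomial.C c * shad f g := by
  ext m; simp [shad_coeff, coeff_C_mul]; ring

lemma shad_C_mul_right {n : ℕ} (c : ℚ) (f g : MvPolynomial (Fin n) ℚ) :
    shad f (MvPolynomial.C c * g) = MvPolynomial.C c * shad f g := by
  ext m; simp [shad_coeff, coeff_C_mul]; ring

lemma shad_X_mul {n : ℕ} (i : Fin n) (P Q : MvPolynomial (Fin n) ℚ) :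
    shad (MvPolynomial.X i * P) Q = MvPolynomial.X i * shad P (MvPolynomial.pderiv i Q) := by
  ext m
  rw [shad_coeff, coeff_X_mul', coeff_X_mul']
  by_cases h : i ∈ m.support
  · rw [if_pos h, if_pos h, shad_coeff, coeff_pderiv]
    have hmi : m i ≠ 0 := Finsupp.mem_support_iff.mp h
    have hle : Finsupp.single i 1 ≤ m := by rw [Finsupp.single_le_iff]; omega
    have hms : m - Finsupp.single i 1 + Finsupp.single i 1 = m := tsub_add_cancel_of_le hle
    have hmi' : ((m - Finsupp.single i 1 : Fin n →₀ ℕ)) i = m i - 1 := by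
      simp [Finsupp.tsub_apply]
    rw [hms, hmi']
    have : (mfact m : ℚ) = ((m i - 1 : ℕ) + 1 : ℚ) * mfact (m - Finsupp.single i 1) := by
      have := mfact_add_single (m - Finsupp.single i 1) i
      rw [hms, hmi'] at this
      rw [this]; push_cast; ring
    rw [this]; ring
  · rw [if_neg h, if_neg h, mul_zero, zero_mul]

lemma pderiv_lin {n : ℕ} (i : Fin n) (a : Fin n → ℚ) :
    MvPolynomial.pderiv i (lin a) = MvPolynomial.C (a i) := by
  rw [lin, map_sum]
  rw [Finset.sum_eq_single i]
  · simp
  · intro j _ hj; simp [pderiv_X_of_ne hj, pderiv_C]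
  · simp

lemma pderiv_prod {n : ℕ} {α : Type*} [DecidableEq α] (i : Fin n) (s : Finset α)
    (f : α → MvPolynomial (Fin n) ℚ) :
    MvPolynomial.pderiv i (∏ j ∈ s, f j) =
      ∑ j ∈ s, MvPolynomial.pderiv i (f j) * ∏ k ∈ s.erase j, f k := by
  induction s using Finset.induction_on with
  | empty => simp
  | insert x s' hx ih =>
    rw [Finset.prod_insert hx, pderiv_mul, ih, Finset.mul_sum, Finset.sum_insert hx,
      Finset.erase_insert hx]
    congr 1
    apply Finset.sum_congr rfl
    intro j hj
    rw [Finset.erase_insert_of_ne (by rintro rfl; exact hx hj), Finset.prod_insert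
      (fun h => hx (Finset.mem_of_mem_erase h))]
    ring

lemma lin_sum {n : ℕ} {α : Type*} (s : Finset α) (c : α → Fin n → ℚ) :
    (∑ k ∈ s, lin (c k)) = lin (fun v => ∑ k ∈ s, c k v) := by
  simp only [lin]
  rw [Finset.sum_comm]
  apply Finset.sum_congr rfl
  intro v _
  rw [← Finset.sum_mul, ← map_sum]

lemma lin_smul {n : ℕ} (r : ℚ) (c : Fin n → ℚ) :
    lin (fun v => r * c v) = MvPolynomial.C r * lin c := by
  simp only [lin, Finset.mul_sum, map_mul]
  apply Finset.sum_congr rfl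
  intro v _; ring

lemma prod_erase_reindex {M : Type*} [CommMonoid M] {d : ℕ} (p : Fin (d + 1))
    (h : Fin (d + 1) → M) :
    ∏ k ∈ Finset.univ.erase p, h k = ∏ i : Fin d, h (Equiv.swap 0 p i.succ) := by
  have keyne : ∀ i : Fin d, Equiv.swap 0 p i.succ ≠ p := by
    intro i hip
    have h2 := congrArg (Equiv.swap 0 p) hip
    rw [Equiv.swap_apply_self, Equiv.swap_apply_right] at h2
    exact Fin.succ_ne_zero i h2
  refine (Finset.prod_bij (fun i _ => Equiv.swap 0 p i.succ) ?_ ?_ ?_ ?_).symm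
  · intro i _
    exact Finset.mem_erase.mpr ⟨keyne i, Finset.mem_univ _⟩
  · intro i _ j _ hij
    exact Fin.succ_injective _ ((Equiv.swap 0 p).injective hij)
  · intro b hb
    have hbp : b ≠ p := (Finset.mem_erase.mp hb).1
    have hb0 : (Equiv.swap 0 p) b ≠ 0 := by
      intro h0
      apply hbp
      have h2 := congrArg (Equiv.swap 0 p) h0
      rwa [Equiv.swap_apply_self, Equiv.swap_apply_left] at h2
    refine ⟨((Equiv.swap 0 p) b).pred hb0, Finset.mem_univ _, ?_⟩
    show (Equiv.swap 0 p) (((Equiv.swap 0 p) b).pred hb0).succ = b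
    rw [Fin.succ_pred, Equiv.swap_apply_self]
  · intro i _; rfl

lemma shad_one_one {n : ℕ} : shad (1 : MvPolynomial (Fin n) ℚ) 1 = 1 := by
  ext m
  rw [shad_coeff]
  rw [coeff_one]
  by_cases h : 0 = m
  · subst h
    simp [mfact]
  · simp [h]

lemma shad_prod_lin {n : ℕ} : ∀ (d : ℕ) (a b : Fin d → Fin n → ℚ),
    shad (∏ j, lin (a j)) (∏ j, lin (b j)) =
      ∑ σ : Equiv.Perm (Fin d), ∏ j, lin (fun v => a j v * b (σ j) v) := by
  intro d
  induction d with
  | zero =>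
    intro a b
    have h0 : ∀ c : Fin 0 → Fin n → ℚ, (∏ j, lin (c j)) = 1 := fun c => by simp
    rw [h0, h0, shad_one_one]
    have h1 : ∀ σ : Equiv.Perm (Fin 0),
        (∏ j, lin (fun v => a j v * b (σ j) v)) = 1 := fun σ => h0 _
    simp only [h1]
    rw [Finset.sum_const, Finset.card_univ, Fintype.card_perm]
    simp
  | succ d ih =>
    intro a b
    -- LHS transformation
    rw [Fin.prod_univ_succ fun j => lin (a j)]
    have step1 : shad (lin (a 0) * ∏ i : Fin d, lin (a i.succ)) (∏ j, lin (b j)) =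
        ∑ v : Fin n, MvPolynomial.C (a 0 v) * (MvPolynomial.X v *
          shad (∏ i : Fin d, lin (a i.succ))
            (MvPolynomial.pderiv v (∏ j, lin (b j)))) := by
      rw [lin, Finset.sum_mul, shad_sum_left]
      apply Finset.sum_congr rfl
      intro v _
      rw [mul_assoc, shad_C_mul_left, shad_X_mul]
    rw [step1]
    have step2 : ∀ v : Fin n, MvPolynomial.pderiv v (∏ j, lin (b j)) =
        ∑ p : Fin (d+1), MvPolynomial.C (b p v) *
          ∏ i : Fin d, lin (b (Equiv.swap 0 p i.succ)) := by
      intro v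
      rw [pderiv_prod]
      apply Finset.sum_congr rfl
      intro p _
      rw [pderiv_lin, prod_erase_reindex]
    have step3 : ∀ v : Fin n, shad (∏ i : Fin d, lin (a i.succ))
          (MvPolynomial.pderiv v (∏ j, lin (b j))) =
        ∑ p : Fin (d+1), MvPolynomial.C (b p v) *
          shad (∏ i : Fin d, lin (a i.succ))
            (∏ i : Fin d, lin (fun w => b (Equiv.swap 0 p i.succ) w)) := by
      intro v
      rw [step2, shad_sum_right]
      apply Finset.sum_congr rfl
      intro p _
      rw [shad_C_mul_right]
    simp only [step3]
    -- now apply IH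
    have step4 : ∀ p : Fin (d+1),
        shad (∏ i : Fin d, lin (a i.succ))
            (∏ i : Fin d, lin (fun w => b (Equiv.swap 0 p i.succ) w)) =
        ∑ τ : Equiv.Perm (Fin d), ∏ i : Fin d,
          lin (fun v => a i.succ v * b (Equiv.swap 0 p (τ i).succ) v) := by
      intro p
      rw [ih (fun i => a i.succ) (fun i => b (Equiv.swap 0 p i.succ))]
    simp only [step4]
    set S : Fin (d+1) → MvPolynomial (Fin n) ℚ :=
      fun p => ∑ τ : Equiv.Perm (Fin d), ∏ i : Fin d,
        lin (fun v => a i.succ v * b (Equiv.swap 0 p (τ i).succ) v) with hS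
    have lhs_eq : (∑ v : Fin n, MvPolynomial.C (a 0 v) * (MvPolynomial.X v *
        ∑ p : Fin (d+1), MvPolynomial.C (b p v) * S p)) =
        ∑ p : Fin (d+1), lin (fun v => a 0 v * b p v) * S p := by
      simp only [Finset.mul_sum]
      rw [Finset.sum_comm]
      apply Finset.sum_congr rfl
      intro p _
      rw [lin, Finset.sum_mul]
      apply Finset.sum_congr rfl
      intro v _
      rw [map_mul]
      ring
    rw [lhs_eq]
    rw [← Equiv.sum_comp (Equiv.Perm.decomposeFin.symm)
      (fun σ : Equiv.Perm (Fin (d+1)) => ∏ j, lin (fun v => a j v * b (σ j) v))]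
    rw [Fintype.sum_prod_type]
    apply Finset.sum_congr rfl
    intro p _
    rw [hS, Finset.mul_sum]
    apply Finset.sum_congr rfl
    intro τ _
    rw [Fin.prod_univ_succ fun j => lin (fun v => a j v *
      b (Equiv.Perm.decomposeFin.symm (p, τ) j) v)]
    simp only [Equiv.Perm.decomposeFin_symm_apply_zero, Equiv.Perm.decomposeFin_symm_apply_succ]

lemma image_univ_eq_univ_iff {d : ℕ} (φ : Fin d → Fin d) :
    Finset.image φ Finset.univ = Finset.univ ↔ Function.Surjective φ := by
  constructor
  · intro h b
    have : b ∈ Finset.image φ Finset.univ := by rw [h]; exact Finset.mem_univ b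
    obtain ⟨a, _, ha⟩ := Finset.mem_image.mp this
    exact ⟨a, ha⟩
  · intro h
    apply Finset.eq_univ_of_forall
    intro b
    obtain ⟨a, ha⟩ := h b
    exact Finset.mem_image.mpr ⟨a, Finset.mem_univ a, ha⟩

lemma ryser {R : Type*} [CommRing R] {d : ℕ} (M : Fin d → Fin d → R) :
    ∑ σ : Equiv.Perm (Fin d), ∏ j, M j (σ j) =
      ∑ S ∈ (Finset.univ : Finset (Fin d)).powerset,
        (-1 : R) ^ (Sᶜ.card) * ∏ j, ∑ k ∈ S, M j k := by
  classical
  have h1 : ∀ S : Finset (Fin d), (∏ j, ∑ k ∈ S, M j k) =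
      ∑ φ ∈ Fintype.piFinset (fun _ : Fin d => S), ∏ j, M j (φ j) :=
    fun S => Finset.prod_univ_sum _ _
  have h2 : ∀ S : Finset (Fin d), Fintype.piFinset (fun _ : Fin d => S) =
      Finset.univ.filter (fun φ : Fin d → Fin d => ∀ j, φ j ∈ S) := by
    intro S; ext φ; simp [Fintype.mem_piFinset]
  have key : ∀ φ : Fin d → Fin d,
      (∑ S ∈ (Finset.univ : Finset (Fin d)).powerset,
        if ∀ j, φ j ∈ S then (-1 : R) ^ (Sᶜ.card) else 0) =
      if Function.Surjective φ then 1 else 0 := by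
    intro φ
    set T : Finset (Fin d) := Finset.image φ Finset.univ with hT
    have comp_inv : ∀ S ∈ (Finset.univ : Finset (Fin d)).powerset,
        Sᶜ ∈ (Finset.univ : Finset (Fin d)).powerset := by
      intro S _; exact Finset.mem_powerset.mpr (Finset.subset_univ _)
    have reindex : (∑ S ∈ (Finset.univ : Finset (Fin d)).powerset,
        if ∀ j, φ j ∈ S then (-1 : R) ^ (Sᶜ.card) else 0) =
        ∑ S ∈ (Finset.univ : Finset (Fin d)).powerset,
          (if ∀ j, φ j ∈ Sᶜ then (-1 : R) ^ (S.card) else 0) := by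
      apply Finset.sum_nbij' (fun S => Sᶜ) (fun S => Sᶜ) comp_inv comp_inv
        (fun S _ => compl_compl S) (fun S _ => compl_compl S)
      intro S _
      rw [compl_compl]
    rw [reindex]
    have cond_eq : ∀ S : Finset (Fin d), (∀ j, φ j ∈ Sᶜ) ↔ S ⊆ Tᶜ := by
      intro S
      constructor
      · intro h x hx
        rw [Finset.mem_compl, hT]
        intro hmem
        obtain ⟨a, _, ha⟩ := Finset.mem_image.mp hmem
        exact Finset.mem_compl.mp (ha ▸ h a) hx
      · intro h j
        rw [Finset.mem_compl]
        intro hj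
        have : φ j ∈ Tᶜ := h hj
        exact Finset.mem_compl.mp this (Finset.mem_image.mpr ⟨j, Finset.mem_univ j, rfl⟩)
    simp only [cond_eq]
    rw [← Finset.sum_filter]
    have hfil : (Finset.univ : Finset (Fin d)).powerset.filter (· ⊆ Tᶜ) = (Tᶜ).powerset := by
      ext S; simp [Finset.mem_powerset, Finset.subset_univ]
    rw [hfil]
    have hint : (∑ S ∈ (Tᶜ).powerset, (-1 : R) ^ S.card) =
        (((∑ S ∈ (Tᶜ).powerset, (-1 : ℤ) ^ S.card) : ℤ) : R) := by
      push_cast; rfl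
    rw [hint, Finset.sum_powerset_neg_one_pow_card]
    have : (Tᶜ = ∅) ↔ Function.Surjective φ := by
      rw [Finset.compl_eq_empty_iff, image_univ_eq_univ_iff]
    split_ifs with h3 h4 h4
    · simp
    · exact absurd (this.mp h3) h4
    · exact absurd (this.mpr h4) h3
    · simp
  calc ∑ σ : Equiv.Perm (Fin d), ∏ j, M j (σ j)
      = ∑ φ ∈ Finset.univ.filter (fun φ : Fin d → Fin d => Function.Surjective φ),
          ∏ j, M j (φ j) := by
        apply Finset.sum_bij (fun (σ : Equiv.Perm (Fin d)) _ => ⇑σ)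
        · intro σ _
          exact Finset.mem_filter.mpr ⟨Finset.mem_univ _, σ.surjective⟩
        · intro σ _ τ _ h
          exact Equiv.coe_fn_injective h
        · intro φ hφ
          have hsurj : Function.Surjective φ := (Finset.mem_filter.mp hφ).2
          have hbij : Function.Bijective φ := Finite.surjective_iff_bijective.mp hsurj
          exact ⟨Equiv.ofBijective φ hbij, Finset.mem_univ _, rfl⟩
        · intro σ _; rfl
    _ = ∑ φ : Fin d → Fin d, if Function.Surjective φ then ∏ j, M j (φ j) else 0 := by
        rw [Finset.sum_filter]
    _ = ∑ φ : Fin d → Fin d, (if Function.Surjective φ then (1:R) else 0) * ∏ j, M j (φ j) := by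
        apply Finset.sum_congr rfl
        intro φ _
        split_ifs <;> simp
    _ = ∑ φ : Fin d → Fin d, (∑ S ∈ (Finset.univ : Finset (Fin d)).powerset,
          if ∀ j, φ j ∈ S then (-1 : R) ^ (Sᶜ.card) else 0) * ∏ j, M j (φ j) := by
        simp only [key]
    _ = ∑ S ∈ (Finset.univ : Finset (Fin d)).powerset,
          (-1 : R) ^ (Sᶜ.card) * ∏ j, ∑ k ∈ S, M j k := by
        simp only [Finset.sum_mul, ite_mul, zero_mul]
        rw [Finset.sum_comm]
        apply Finset.sum_congr rfl
        intro S _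
        rw [h1, h2, Finset.sum_filter, Finset.mul_sum]
        apply Finset.sum_congr rfl
        intro φ _
        split_ifs <;> simp

lemma sign_prod {d : ℕ} (S : Finset (Fin d)) :
    (∏ j : Fin d, (if (j : ℕ) = 0 then ((-1 : ℚ) ^ (Sᶜ.card)) else 1)) =
      (-1 : ℚ) ^ (Sᶜ.card) := by
  cases d with
  | zero =>
    have : Sᶜ = ∅ := Finset.eq_empty_of_isEmpty _
    simp [this]
  | succ d =>
    rw [Fin.prod_univ_succ]
    simp [Fin.val_succ]

theorem shad_sum_products_representation {n d s s' : ℕ}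
    (a : Fin s → Fin d → Fin n → ℚ) (b : Fin s' → Fin d → Fin n → ℚ)
    (f g : MvPolynomial (Fin n) ℚ)
    (hf : f = ∑ i, ∏ j, lin (a i j)) (hg : g = ∑ i, ∏ j, lin (b i j)) :
    ∃ (t : ℕ) (c : Fin t → Fin d → Fin n → ℚ),
      t ≤ 2 ^ d * s * s' ∧ shad f g = ∑ i, ∏ j, lin (c i j) := by
  classical
  -- coefficient family indexed by triples
  set C' : Fin s × Fin s' × Finset (Fin d) → Fin d → Fin n → ℚ :=
    fun x j v => (if (j : ℕ) = 0 then ((-1 : ℚ) ^ ((x.2.2)ᶜ.card)) else 1) *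
      ∑ k ∈ x.2.2, a x.1 j v * b x.2.1 k v with hC'
  have main : shad f g = ∑ x : Fin s × Fin s' × Finset (Fin d), ∏ j, lin (C' x j) := by
    rw [hf, hg, shad_sum_left]
    rw [Fintype.sum_prod_type]
    apply Finset.sum_congr rfl
    intro i _
    rw [shad_sum_right, Fintype.sum_prod_type]
    apply Finset.sum_congr rfl
    intro i' _
    rw [shad_prod_lin d (a i) (b i'),
      ryser (fun j k => lin (fun v => a i j v * b i' k v)), Finset.powerset_univ]
    apply Finset.sum_congr rfl
    intro S _
    have e1 : ∀ j : Fin d, (∑ k ∈ S, lin (fun v => a i j v * b i' k v)) =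
        lin (fun v => ∑ k ∈ S, a i j v * b i' k v) := fun j => lin_sum S _
    simp only [e1]
    have e2 : ∀ j : Fin d, lin (C' (i, i', S) j) =
        MvPolynomial.C (if (j : ℕ) = 0 then ((-1 : ℚ) ^ (Sᶜ.card)) else 1) *
          lin (fun v => ∑ k ∈ S, a i j v * b i' k v) := fun j => lin_smul _ _
    simp only [e2]
    rw [Finset.prod_mul_distrib, ← map_prod, sign_prod S]
    congr 1
    rw [map_pow, map_neg, map_one]
  refine ⟨2 ^ d * s * s', ?_⟩
  have hcard : Fintype.card (Fin s × Fin s' × Finset (Fin d)) = 2 ^ d * s * s' := by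
    simp only [Fintype.card_prod, Fintype.card_fin, Fintype.card_finset]
    ring
  set e := Fintype.equivFinOfCardEq hcard with he
  refine ⟨fun w => C' (e.symm w), le_refl _, ?_⟩
  rw [main, ← Equiv.sum_comp e.symm (fun x => ∏ j, lin (C' x j))]
end
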